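/- arXiv:2512.02291 — 4 statements merged into one kernel-verified Lean document; each statement's English description precedes it below -/
import Mathlib

section
/- If η > ν > 0 and σ > 1, then the absorbing interval J = [ν, η) is forward invariant under h: for every z ∈ J, h(z; η, ν, σ) ∈ J. The same holds for J = (η, ν] when 0 < η < ν. -/
/-- The branch index: the unique `k` with `z ∈ [σ^(-k), σ^(-(k-1)))`. -/
noncomputable def Kidx (σ z : ℝ) : ℤ := ⌈-Real.log z / Real.log σ⌉

/-- The linear branch `h_k`. -/
noncomputable def hbranch (σ η ν : ℝ) (k : ℤ) (z : ℝ) : ℝ :=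
  (η - ν) / (σ - 1) * σ ^ k * z + (-η + σ * ν) / (σ - 1)

/-- The map `h`, defined as the branch `h_k` for the unique `k` with `z ∈ I_k`. -/
noncomputable def hmap (σ η ν z : ℝ) : ℝ := hbranch σ η ν (Kidx σ z) z

lemma key_bounds (σ z : ℝ) (hσ : 1 < σ) (hz : 0 < z) :
    1 ≤ σ ^ (Kidx σ z) * z ∧ σ ^ (Kidx σ z) * z < σ := by
  have hσ0 : (0:ℝ) < σ := lt_trans one_pos hσ
  have hlogσ : 0 < Real.log σ := Real.log_pos hσ
  set k : ℤ := Kidx σ z with hk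
  have hpow : (0:ℝ) < σ ^ k := zpow_pos hσ0 k
  have hwpos : 0 < σ ^ k * z := mul_pos hpow hz
  have h1 : (-Real.log z / Real.log σ) ≤ (k:ℝ) := Int.le_ceil _
  have h2 : (k:ℝ) < -Real.log z / Real.log σ + 1 := Int.ceil_lt_add_one _
  have hlogw : Real.log (σ ^ k * z) = (k:ℝ) * Real.log σ + Real.log z := by
    rw [Real.log_mul (ne_of_gt hpow) (ne_of_gt hz), Real.log_zpow]
  constructor
  · rw [← Real.log_nonneg_iff hwpos, hlogw]
    have : -Real.log z ≤ (k:ℝ) * Real.log σ := by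
      have := (div_le_iff₀ hlogσ).mp h1
      linarith
    linarith
  · have : Real.log (σ ^ k * z) < Real.log σ := by
      rw [hlogw]
      have h3 : ((k:ℝ) - 1) * Real.log σ < -Real.log z :=
        (lt_div_iff₀ hlogσ).mp (by linarith : (k:ℝ) - 1 < -Real.log z / Real.log σ)
      linarith
    exact (Real.log_lt_log_iff hwpos hσ0).mp this

theorem absorbing_interval_invariant (σ η ν : ℝ) (hσ : 1 < σ) :
    (η > ν → ν > 0 → ∀ z ∈ Set.Ico ν η, hmap σ η ν z ∈ Set.Ico ν η) ∧
      (0 < η → η < ν → ∀ z ∈ Set.Ioc η ν, hmap σ η ν z ∈ Set.Ioc η ν) := by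
  have hσ1 : (0:ℝ) < σ - 1 := by linarith
  constructor
  · intro hην hν z hz
    have hz0 : 0 < z := lt_of_lt_of_le hν hz.1
    obtain ⟨hw1, hw2⟩ := key_bounds σ z hσ hz0
    set w := σ ^ (Kidx σ z) * z with hw
    have hmapeq : hmap σ η ν z = ((η - ν) * w + (-η + σ * ν)) / (σ - 1) := by
      unfold hmap hbranch
      field_simp [hw]
      ring
    rw [hmapeq]
    constructor
    · rw [le_div_iff₀ hσ1]; nlinarith
    · rw [div_lt_iff₀ hσ1]; nlinarith
  · intro hη hην z hz
    have hz0 : 0 < z := lt_trans hη hz.1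
    obtain ⟨hw1, hw2⟩ := key_bounds σ z hσ hz0
    set w := σ ^ (Kidx σ z) * z with hw
    have hmapeq : hmap σ η ν z = ((η - ν) * w + (-η + σ * ν)) / (σ - 1) := by
      unfold hmap hbranch
      field_simp [hw]
      ring
    rw [hmapeq]
    constructor
    · rw [lt_div_iff₀ hσ1]; nlinarith
    · rw [div_le_iff₀ hσ1]; nlinarith
end

section
/- Let η, ν > 0 and σ > 1, and let N(η, ν, σ) be the number of integers k such that I_k ∩ J ≠ ∅, where J is the half-open interval with endpoints η and ν. Then N(η, ν, σ) = ⌈−ln(η)/ln(σ)⌉ − ⌈−ln(ν)/ln(σ)⌉ + 1 if η ≤ ν, and N(η, ν, σ) = ⌈−ln(ν)/ln(σ)⌉ − ⌊−ln(η)/ln(σ)⌋ if η > ν. -/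
/-- The interval `I_k = [σ^(-k), σ^(-(k-1)))`. -/
def Ik (σ : ℝ) (k : ℤ) : Set ℝ := Set.Ico (σ ^ (-k)) (σ ^ (-(k - 1)))

/-- The absorbing interval `J`, with endpoints `η` and `ν`. -/
noncomputable def Jset (η ν : ℝ) : Set ℝ :=
  if η < ν then Set.Ioc η ν else if η = ν then {η} else Set.Ico ν η

private lemma zle {σ x : ℝ} (hσ : 1 < σ) (hx : 0 < x) (k : ℤ) :
    σ ^ (-k) ≤ x ↔ ⌈-Real.log x / Real.log σ⌉ ≤ k := by
  have h0 : (0:ℝ) < σ := lt_trans one_pos hσ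
  have hL : 0 < Real.log σ := Real.log_pos hσ
  rw [← Real.log_le_log_iff (zpow_pos h0 _) hx, Real.log_zpow, Int.ceil_le, div_le_iff₀ hL]
  push_cast
  constructor <;> intro h <;> linarith

private lemma zlt_upper {σ x : ℝ} (hσ : 1 < σ) (hx : 0 < x) (k : ℤ) :
    x < σ ^ (-(k - 1)) ↔ k ≤ ⌈-Real.log x / Real.log σ⌉ := by
  have h0 : (0:ℝ) < σ := lt_trans one_pos hσ
  have hL : 0 < Real.log σ := Real.log_pos hσ
  rw [← Real.log_lt_log_iff hx (zpow_pos h0 _), Real.log_zpow,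
    show (k ≤ ⌈-Real.log x / Real.log σ⌉) ↔ (k - 1 < ⌈-Real.log x / Real.log σ⌉) from by omega,
    Int.lt_ceil, lt_div_iff₀ hL]
  push_cast
  constructor <;> intro h <;> linarith

private lemma zlt_lower {σ x : ℝ} (hσ : 1 < σ) (hx : 0 < x) (k : ℤ) :
    σ ^ (-k) < x ↔ ⌊-Real.log x / Real.log σ⌋ < k := by
  have h0 : (0:ℝ) < σ := lt_trans one_pos hσ
  have hL : 0 < Real.log σ := Real.log_pos hσ
  rw [← Real.log_lt_log_iff (zpow_pos h0 _) hx, Real.log_zpow, Int.floor_lt, div_lt_iff₀ hL]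
  push_cast
  constructor <;> intro h <;> linarith

theorem number_of_branches (σ η ν : ℝ) (hσ : 1 < σ) (hη : 0 < η) (hν : 0 < ν) :
    ({k : ℤ | (Ik σ k ∩ Jset η ν).Nonempty}.ncard : ℤ) =
      if η ≤ ν then
        ⌈-Real.log η / Real.log σ⌉ - ⌈-Real.log ν / Real.log σ⌉ + 1
      else
        ⌈-Real.log ν / Real.log σ⌉ - ⌊-Real.log η / Real.log σ⌋ := by
  have h0 : (0:ℝ) < σ := lt_trans one_pos hσ
  have hL : 0 < Real.log σ := Real.log_pos hσ
  set cη := ⌈-Real.log η / Real.log σ⌉ with hcη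
  set cν := ⌈-Real.log ν / Real.log σ⌉ with hcν
  set fη := ⌊-Real.log η / Real.log σ⌋ with hfη
  have hmono : ∀ k : ℤ, σ ^ (-k) < σ ^ (-(k - 1)) := by
    intro k
    apply zpow_lt_zpow_right₀ hσ
    omega
  rcases lt_trichotomy η ν with h | h | h
  · -- η < ν
    have hJ : Jset η ν = Set.Ioc η ν := if_pos h
    have hset : {k : ℤ | (Ik σ k ∩ Jset η ν).Nonempty} = ↑(Finset.Icc cν cη) := by
      ext k
      simp only [Set.mem_setOf_eq, Finset.coe_Icc, Set.mem_Icc, hJ, Ik]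
      constructor
      · rintro ⟨x, ⟨hx1, hx2⟩, hx3, hx4⟩
        exact ⟨(zle hσ hν k).mp (le_trans hx1 hx4), (zlt_upper hσ hη k).mp (lt_trans hx3 hx2)⟩
      · rintro ⟨h1, h2⟩
        have ha : σ ^ (-k) ≤ ν := (zle hσ hν k).mpr h1
        have hb : η < σ ^ (-(k - 1)) := (zlt_upper hσ hη k).mpr h2
        by_cases hc : η < σ ^ (-k)
        · exact ⟨σ ^ (-k), ⟨le_refl _, hmono k⟩, hc, ha⟩
        · push_neg at hc
          refine ⟨min ν ((η + σ ^ (-(k - 1))) / 2), ⟨?_, ?_⟩, ?_, min_le_left _ _⟩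
          · exact le_min ha (le_trans hc (by linarith))
          · exact lt_of_le_of_lt (min_le_right _ _) (by linarith)
          · exact lt_min h (by linarith)
    have hle : cν ≤ cη := by
      apply Int.ceil_le_ceil
      have : Real.log η ≤ Real.log ν := (Real.log_le_log_iff hη hν).mpr h.le
      gcongr
    rw [hset, Set.ncard_coe_finset, Int.card_Icc, if_pos h.le, Int.toNat_of_nonneg (by omega)]
    ring
  · -- η = ν
    subst h
    have hJ : Jset η η = {η} := by simp [Jset]
    have hset : {k : ℤ | (Ik σ k ∩ Jset η η).Nonempty} = {cη} := by
      ext k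
      simp only [Set.mem_setOf_eq, hJ, Ik, Set.mem_singleton_iff]
      constructor
      · rintro ⟨x, ⟨hx1, hx2⟩, hx3⟩
        simp only [Set.mem_singleton_iff] at hx3
        subst hx3
        have := (zle hσ hη k).mp hx1
        have := (zlt_upper hσ hη k).mp hx2
        omega
      · rintro rfl
        exact ⟨η, ⟨(zle hσ hη _).mpr le_rfl, (zlt_upper hσ hη _).mpr le_rfl⟩, rfl⟩
    rw [hset, Set.ncard_singleton, if_pos le_rfl]
    omega
  · -- ν < η
    have hJ : Jset η ν = Set.Ico ν η := by
      rw [Jset, if_neg (not_lt.mpr h.le), if_neg h.ne']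
    have hset : {k : ℤ | (Ik σ k ∩ Jset η ν).Nonempty} = ↑(Finset.Icc (fη + 1) cν) := by
      ext k
      simp only [Set.mem_setOf_eq, Finset.coe_Icc, Set.mem_Icc, hJ, Ik]
      constructor
      · rintro ⟨x, ⟨hx1, hx2⟩, hx3, hx4⟩
        have h1 : fη < k := (zlt_lower hσ hη k).mp (lt_of_le_of_lt hx1 hx4)
        have h2 : k ≤ cν := (zlt_upper hσ hν k).mp (lt_of_le_of_lt hx3 hx2)
        omega
      · rintro ⟨h1, h2⟩
        have ha : σ ^ (-k) < η := (zlt_lower hσ hη k).mpr (by omega)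
        have hb : ν < σ ^ (-(k - 1)) := (zlt_upper hσ hν k).mpr h2
        exact ⟨max ν (σ ^ (-k)), ⟨le_max_right _ _, max_lt hb (hmono k)⟩,
          le_max_left _ _, max_lt h ha⟩
    have hle : fη < cν := by
      rw [hfη, hcν, Int.lt_ceil]
      have h1 : (fη : ℝ) ≤ -Real.log η / Real.log σ := Int.floor_le _
      have h2 : Real.log ν < Real.log η := (Real.log_lt_log_iff hν hη).mpr h
      have h3 : -Real.log η / Real.log σ < -Real.log ν / Real.log σ := by
        gcongr
      linarith
    rw [hset, Set.ncard_coe_finset, Int.card_Icc, if_neg (not_le.mpr h),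
      Int.toNat_of_nonneg (by omega)]
    ring
end

section
/- Let σ > 1, k ∈ ℤ, η, ν ∈ ℝ with η ≠ ν, and suppose |s_k| < 1 where s_k = ((η − ν)/(σ − 1))·σ^k. Then the fixed point z_k* = (−η + σν)/(σ − 1 − (η − ν)σ^k) lies in the open interval (σ^(−k), σ^(−(k−1))) if and only if ν > σ^(−k) and η < σ^(−k+1). -/
theorem fixed_point_in_interval (σ η ν : ℝ) (k : ℤ) (hσ : 1 < σ) (hην : η ≠ ν)
    (hs : |(η - ν) / (σ - 1) * σ ^ k| < 1) :
    (-η + σ * ν) / (σ - 1 - (η - ν) * σ ^ k) ∈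
        Set.Ioo (σ ^ (-k)) (σ ^ (-(k - 1))) ↔
      (ν > σ ^ (-k) ∧ η < σ ^ (-k + 1)) := by
  have hσ0 : (0:ℝ) < σ := by linarith
  have hσne : σ ≠ 0 := ne_of_gt hσ0
  have hσ1 : (0:ℝ) < σ - 1 := by linarith
  have hk : (0:ℝ) < σ ^ k := zpow_pos hσ0 k
  have hnk : (0:ℝ) < σ ^ (-k) := zpow_pos hσ0 (-k)
  have hx : σ ^ (-k) * σ ^ k = 1 := by
    rw [← zpow_add₀ hσne]; simp
  have h2 : σ ^ (-(k - 1)) = σ * σ ^ (-k) := by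
    rw [show -(k-1) = 1 + -k by ring, zpow_add₀ hσne, zpow_one]
  have h3 : σ ^ (-k + 1) = σ * σ ^ (-k) := by
    rw [show -k + 1 = 1 + -k by ring, zpow_add₀ hσne, zpow_one]
  have habs := abs_lt.1 hs
  have hD : 0 < σ - 1 - (η - ν) * σ ^ k := by
    have h := habs.2
    have : (η - ν) / (σ - 1) * σ ^ k * (σ - 1) = (η - ν) * σ ^ k := by
      field_simp
    nlinarith
  have key1 : σ ^ (-k) * (σ - 1 - (η - ν) * σ ^ k) = σ ^ (-k) * (σ - 1) - (η - ν) := by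
    linear_combination (ν - η) * hx
  have key2 : σ * σ ^ (-k) * (σ - 1 - (η - ν) * σ ^ k)
      = σ * (σ ^ (-k) * (σ - 1)) - σ * (η - ν) := by
    linear_combination (σ * (ν - η)) * hx
  rw [Set.mem_Ioo, lt_div_iff₀ hD, div_lt_iff₀ hD, h2, h3, key1, key2]
  constructor
  · rintro ⟨ha, hb⟩
    refine ⟨?_, ?_⟩
    · nlinarith
    · nlinarith
  · rintro ⟨ha, hb⟩
    refine ⟨?_, ?_⟩
    · nlinarith
    · nlinarith
end

section
/- Let σ > 1 and, for each k ∈ ℤ, let P_k be the open triangle {(η, ν) ∈ ℝ² : η < σ^(−k+1), σ^(−k) < ν < η + σ^(−k+1) − σ^(−k)}. Then for distinct integers k₁, k₂, the intersection P_{k₁} ∩ P_{k₂} is nonempty if and only if |k₁ − k₂| = 1. -/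
/-- The open triangle `P_k` in the `(η, ν)`-plane. -/
def Ptri (σ : ℝ) (k : ℤ) : Set (ℝ × ℝ) :=
  {p | p.1 < σ ^ (-k + 1) ∧ σ ^ (-k) < p.2 ∧ p.2 < p.1 + σ ^ (-k + 1) - σ ^ (-k)}

lemma Ptri_adj (σ : ℝ) (hσ : 1 < σ) (k : ℤ) :
    (Ptri σ k ∩ Ptri σ (k+1)).Nonempty := by
  have hσ0 : (0:ℝ) < σ := lt_trans one_pos hσ
  set a : ℝ := σ ^ (-k) with ha
  set b : ℝ := σ ^ (-k-1) with hb
  set c : ℝ := σ ^ (-k+1) with hc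
  have ha0 : 0 < a := zpow_pos hσ0 _
  have hb0 : 0 < b := zpow_pos hσ0 _
  have hca : c = σ * a := by
    rw [hc, ha, ← zpow_one_add₀ (ne_of_gt hσ0)]; ring_nf
  have hab : a = σ * b := by
    rw [ha, hb, ← zpow_one_add₀ (ne_of_gt hσ0)]; ring_nf
  have hba : b < a := by nlinarith
  have hac : a < c := by nlinarith
  set η : ℝ := (a + b) / 2 with hη
  set u₁ : ℝ := η + c - a with hu₁
  set u₂ : ℝ := η + a - b with hu₂
  have hau₁ : a < u₁ := by
    have : (a - b) / 2 < c - a := by nlinarith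
    simp only [hu₁, hη]; linarith
  have hau₂ : a < u₂ := by simp only [hu₂, hη]; linarith
  set ν : ℝ := (a + min u₁ u₂) / 2 with hν
  have haν : a < ν := by
    have := lt_min hau₁ hau₂
    simp only [hν]; linarith
  have hν₁ : ν < u₁ := by
    have h := min_le_left u₁ u₂
    simp only [hν]; linarith
  have hν₂ : ν < u₂ := by
    have h := min_le_right u₁ u₂
    simp only [hν]; linarith
  refine ⟨(η, ν), ⟨?_, ?_, ?_⟩, ⟨?_, ?_, ?_⟩⟩
  · show η < c; simp only [hη]; linarith
  · exact haν
  · show ν < η + c - a; linarith [hν₁]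
  · show η < σ ^ (-(k+1)+1)
    have : σ ^ (-(k+1)+1) = a := by rw [ha]; ring_nf
    rw [this]; simp only [hη]; linarith
  · show σ ^ (-(k+1)) < ν
    have : σ ^ (-(k+1)) = b := by rw [hb]; ring_nf
    rw [this]; linarith
  · show ν < η + σ ^ (-(k+1)+1) - σ ^ (-(k+1))
    have h1 : σ ^ (-(k+1)+1) = a := by rw [ha]; ring_nf
    have h2 : σ ^ (-(k+1)) = b := by rw [hb]; ring_nf
    rw [h1, h2]; linarith [hν₂]

lemma Ptri_far (σ : ℝ) (hσ : 1 < σ) (k₁ k₂ : ℤ) (h : k₁ + 2 ≤ k₂) :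
    ¬ (Ptri σ k₁ ∩ Ptri σ k₂).Nonempty := by
  rintro ⟨⟨η, ν⟩, ⟨_, h1, _⟩, ⟨h3, _, h2⟩⟩
  have hσ0 : (0:ℝ) < σ := lt_trans one_pos hσ
  simp only [Ptri, Set.mem_setOf_eq] at h1 h2 h3
  have hd : (2:ℤ) ≤ k₂ - k₁ := by omega
  have hpow : σ ^ (2:ℤ) ≤ σ ^ (k₂ - k₁) := zpow_le_zpow_right₀ hσ.le hd
  have hsq : σ ^ (2:ℤ) = σ * σ := by
    rw [zpow_two]
  have hsplit : σ ^ (-k₁) = σ ^ (-k₂) * σ ^ (k₂ - k₁) := by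
    rw [← zpow_add₀ (ne_of_gt hσ0)]; ring_nf
  have hb0 : (0:ℝ) < σ ^ (-k₂) := zpow_pos hσ0 _
  have hc2 : σ ^ (-k₂+1) = σ * σ ^ (-k₂) := by
    rw [← zpow_one_add₀ (ne_of_gt hσ0)]; ring_nf
  -- ν < 2c - b where c = σ^{-k₂+1}, b = σ^{-k₂}
  have key : σ ^ (-k₂) * (2*σ - 1) ≤ σ ^ (-k₁) := by
    have hss : σ * σ ≤ σ ^ (k₂ - k₁) := by rw [← hsq]; exact hpow
    have h2σ' : 2*σ - 1 ≤ σ * σ := by nlinarith [mul_self_nonneg (σ - 1)]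
    have h2σ : 2*σ - 1 ≤ σ ^ (k₂ - k₁) := le_trans h2σ' hss
    rw [hsplit]
    exact mul_le_mul_of_nonneg_left h2σ hb0.le
  nlinarith

theorem triangle_intersections (σ : ℝ) (hσ : 1 < σ) (k₁ k₂ : ℤ) (hne : k₁ ≠ k₂) :
    (Ptri σ k₁ ∩ Ptri σ k₂).Nonempty ↔ |k₁ - k₂| = 1 := by
  constructor
  · intro hne'
    by_contra habs
    rw [abs_eq (by norm_num : (0:ℤ) ≤ 1)] at habs
    push_neg at habs
    obtain ⟨ha1, ha2⟩ := habs
    rcases lt_or_gt_of_ne hne with h | h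
    · have : k₁ + 2 ≤ k₂ := by omega
      exact Ptri_far σ hσ k₁ k₂ this hne'
    · have : k₂ + 2 ≤ k₁ := by omega
      exact Ptri_far σ hσ k₂ k₁ this (by rwa [Set.inter_comm] at hne')
  · intro h
    rcases abs_eq (by norm_num : (0:ℤ) ≤ 1) |>.mp h with h | h
    · have : k₁ = k₂ + 1 := by omega
      subst this
      rw [Set.inter_comm]
      exact Ptri_adj σ hσ k₂
    · have : k₂ = k₁ + 1 := by omega
      subst this
      exact Ptri_adj σ hσ k₁
end
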